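/- arXiv:1209.1849 — 2 statements merged into one kernel-verified Lean document; each statement's English description precedes it below -/
import Mathlib

section
/- Let n ≥ 1, let Ω be a real invertible antisymmetric 2n×2n matrix, and let a ∈ 𝒮(ℝ^{2n}). Define K(z,u) = (2/π)^n |det Ω|^{-1/2} F_ω a(2(z−u)) e^{2iω(z,u)} (the kernel of the phase-space operator Ã_ω). Then the Weyl symbol of Ã_ω, obtained from the kernel by the partial Fourier transform in the second variable, equals a(z − (1/2)Ωζ): for all z, ζ ∈ ℝ^{2n}, ∫_{ℝ^{2n}} e^{-iζ·ζ'} K(z + ζ'/2, z − ζ'/2) dζ' = a(z − (1/2)Ωζ). -/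
open MeasureTheory Matrix

/-- The symplectic form associated to an invertible antisymmetric matrix `Ω`. -/
noncomputable def symplForm {m : ℕ} (Ω : Matrix (Fin m) (Fin m) ℝ)
    (z z' : Fin m → ℝ) : ℝ :=
  z ⬝ᵥ (Ω⁻¹ *ᵥ z')

/-- The `ω`-symplectic Fourier transform. -/
noncomputable def Fomega {m : ℕ} (n : ℕ) (Ω : Matrix (Fin m) (Fin m) ℝ)
    (a : (Fin m → ℝ) → ℂ) (z : Fin m → ℝ) : ℂ :=
  ((((2 * Real.pi) ^ n : ℝ)⁻¹ : ℝ) : ℂ) * (((Real.sqrt |Ω.det|)⁻¹ : ℝ) : ℂ) *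
    ∫ z' : Fin m → ℝ, Complex.exp (-Complex.I * ((symplForm Ω z z' : ℝ) : ℂ)) * a z'

/-- The kernel `K(z,u) = (2/π)^n |det Ω|^{-1/2} F_ω a(2(z−u)) e^{2iω(z,u)}`
of the phase-space operator `Ã_ω`. -/
noncomputable def Akernel {m : ℕ} (n : ℕ) (Ω : Matrix (Fin m) (Fin m) ℝ)
    (a : (Fin m → ℝ) → ℂ) (z u : Fin m → ℝ) : ℂ :=
  (((2 / Real.pi) ^ n : ℝ) : ℂ) * (((Real.sqrt |Ω.det|)⁻¹ : ℝ) : ℂ) *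
    Fomega n Ω a ((2 : ℝ) • (z - u)) *
    Complex.exp (2 * Complex.I * ((symplForm Ω z u : ℝ) : ℂ))

open FourierTransform Real Complex RealInnerProductSpace

noncomputable def toE {m : ℕ} (a : SchwartzMap (Fin m → ℝ) ℂ) :
    SchwartzMap (EuclideanSpace ℝ (Fin m)) ℂ :=
  SchwartzMap.compCLMOfContinuousLinearEquiv ℝ (EuclideanSpace.equiv (Fin m) ℝ) a

lemma scalar_id (k l : ℕ) (x y c : ℂ) (hx : x ≠ 0) (hy : y ≠ 0) :
    x ^ 2 * y ^ k * c * x⁻¹ ^ 2 * y⁻¹ ^ k * (1 / 2) ^ l * 2 ^ l = c := by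
  rw [inv_pow, inv_pow, div_pow, one_pow]
  have h2 : ((2:ℂ) ^ l) ≠ 0 := pow_ne_zero _ two_ne_zero
  have hxp : (x ^ 2) ≠ 0 := pow_ne_zero _ hx
  have hyp : (y ^ k) ≠ 0 := pow_ne_zero _ hy
  field_simp

lemma pi_int_eq {m : ℕ} (f : (Fin m → ℝ) → ℂ) :
    ∫ y, f y = ∫ (x : EuclideanSpace ℝ (Fin m)), f ((MeasurableEquiv.toLp 2 (Fin m → ℝ)).symm x) :=
  ((EuclideanSpace.volume_preserving_symm_measurableEquiv_toLp _).integral_comp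
    (MeasurableEquiv.toLp 2 _).symm.measurableEmbedding f).symm

lemma exp_aux1 (d : ℝ) :
    Complex.exp (((-2 * Real.pi * ((2 * Real.pi)⁻¹ * d) : ℝ) : ℂ) * Complex.I)
      = Complex.exp (-Complex.I * (d : ℂ)) := by
  have h : -2 * Real.pi * ((2 * Real.pi)⁻¹ * d) = -d := by
    field_simp
  rw [h]; push_cast; ring_nf

lemma exp_aux2 (d : ℝ) :
    Complex.exp (((2 * Real.pi * ((2 * Real.pi)⁻¹ * d) : ℝ) : ℂ) * Complex.I)
      = Complex.exp (Complex.I * (d : ℂ)) := by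
  have h : 2 * Real.pi * ((2 * Real.pi)⁻¹ * d) = d := by
    field_simp
  rw [h]; ring_nf

lemma hdotE {m : ℕ} (x y : EuclideanSpace ℝ (Fin m)) :
    (inner ℝ x y : ℝ) = ((MeasurableEquiv.toLp 2 (Fin m → ℝ)).symm y)
      ⬝ᵥ ((MeasurableEquiv.toLp 2 (Fin m → ℝ)).symm x) := by
  simp only [PiLp.inner_apply, RCLike.inner_apply, starRingEnd_apply, star_trivial,
    dotProduct]
  exact Finset.sum_congr rfl fun i _ => rfl

lemma Fhat_eq {m : ℕ} (a : SchwartzMap (Fin m → ℝ) ℂ) (u : EuclideanSpace ℝ (Fin m)) :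
    (∫ v : Fin m → ℝ, Complex.exp (-Complex.I *
        ((((MeasurableEquiv.toLp 2 (Fin m → ℝ)).symm u) ⬝ᵥ v : ℝ) : ℂ)) * a v)
    = 𝓕 ((toE a) : EuclideanSpace ℝ (Fin m) → ℂ) ((2 * Real.pi)⁻¹ • u) := by
  have haE : ∀ x : EuclideanSpace ℝ (Fin m),
      toE a x = a ((MeasurableEquiv.toLp 2 (Fin m → ℝ)).symm x) := fun x => rfl
  rw [pi_int_eq, Real.fourier_eq']
  congr 1
  ext v
  rw [smul_eq_mul, ← haE]
  congr 1
  rw [show (inner ℝ v ((2 * Real.pi)⁻¹ • u) : ℝ) = (2 * Real.pi)⁻¹ * (inner ℝ v u : ℝ) from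
    real_inner_smul_right _ _ _, hdotE, ← exp_aux1]

lemma Fh_cont {m : ℕ} (a : SchwartzMap (Fin m → ℝ) ℂ) :
    Continuous (fun x : Fin m → ℝ =>
      ∫ v : Fin m → ℝ, Complex.exp (-Complex.I * ((x ⬝ᵥ v : ℝ) : ℂ)) * a v) := by
  have hc1 : Continuous (𝓕 ((toE a) : EuclideanSpace ℝ (Fin m) → ℂ)) := by
    rw [← SchwartzMap.fourier_coe]
    exact (𝓕 (toE a)).continuous
  have hc : Continuous fun x : Fin m → ℝ =>
      𝓕 ((toE a) : EuclideanSpace ℝ (Fin m) → ℂ)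
        ((2 * Real.pi)⁻¹ • ((EuclideanSpace.equiv (Fin m) ℝ).symm x)) :=
    hc1.comp (by fun_prop)
  refine hc.congr fun x => ?_
  exact (Fhat_eq a ((EuclideanSpace.equiv (Fin m) ℝ).symm x)).symm

lemma invA {m : ℕ} (a : SchwartzMap (Fin m → ℝ) ℂ) (w : Fin m → ℝ) :
    ∫ u : Fin m → ℝ, Complex.exp (Complex.I * ((w ⬝ᵥ u : ℝ) : ℂ)) *
      (∫ v : Fin m → ℝ, Complex.exp (-Complex.I * ((u ⬝ᵥ v : ℝ) : ℂ)) * a v)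
    = (((2 * Real.pi) ^ m : ℝ) : ℂ) * a w := by
  have haE : ∀ x : EuclideanSpace ℝ (Fin m),
      toE a x = a ((MeasurableEquiv.toLp 2 (Fin m → ℝ)).symm x) := fun x => rfl
  have hFint : Integrable (𝓕 ((toE a) : EuclideanSpace ℝ (Fin m) → ℂ)) := by
    have := (SchwartzMap.fourierTransformCLM ℂ (toE a)).integrable (μ := volume)
    rwa [SchwartzMap.fourierTransformCLM_apply, SchwartzMap.fourier_coe] at this
  have hdot := fun (x y : EuclideanSpace ℝ (Fin m)) => hdotE x y
  have hinner := fun (u : EuclideanSpace ℝ (Fin m)) => Fhat_eq a u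
  -- outer integral
  set wE := (MeasurableEquiv.toLp 2 (Fin m → ℝ)).symm.symm w with hwE
  have hw : (MeasurableEquiv.toLp 2 (Fin m → ℝ)).symm wE = w := by
    rw [hwE]; simp
  set H : EuclideanSpace ℝ (Fin m) → ℂ := fun t =>
    Complex.exp (((2 * Real.pi * (inner ℝ t wE : ℝ) : ℝ) : ℂ) * Complex.I) *
      𝓕 ((toE a) : EuclideanSpace ℝ (Fin m) → ℂ) t with hH
  rw [pi_int_eq]
  have step : ∀ u : EuclideanSpace ℝ (Fin m),
      Complex.exp (Complex.I * (((w ⬝ᵥ ((MeasurableEquiv.toLp 2 (Fin m → ℝ)).symm u)) : ℝ) : ℂ)) *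
        (∫ v : Fin m → ℝ, Complex.exp (-Complex.I *
          ((((MeasurableEquiv.toLp 2 (Fin m → ℝ)).symm u) ⬝ᵥ v : ℝ) : ℂ)) * a v)
      = H ((2 * Real.pi)⁻¹ • u) := by
    intro u
    rw [hinner, hH]
    simp only []
    congr 1
    rw [show (inner ℝ ((2 * Real.pi)⁻¹ • u) wE : ℝ)
        = (2 * Real.pi)⁻¹ * (inner ℝ u wE : ℝ) from real_inner_smul_left _ _ _,
      hdot, hw, exp_aux2]
  simp_rw [step]
  rw [MeasureTheory.Measure.integral_comp_inv_smul volume H (2 * Real.pi)]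
  have hrank : Module.finrank ℝ (EuclideanSpace ℝ (Fin m)) = m := by
    simp
  rw [hrank]
  have hinvrs : (∫ t, H t) = (toE a) wE := by
    have hi := ((toE a).continuous.fourierInv_fourier_eq ((toE a).integrable) hFint)
    calc (∫ t, H t)
        = 𝓕⁻ (𝓕 ((toE a) : EuclideanSpace ℝ (Fin m) → ℂ)) wE := by
          rw [Real.fourierInv_eq']
          rfl
      _ = (toE a) wE := by rw [hi]
  rw [hinvrs, haE, hw, _root_.abs_of_nonneg (by positivity : (0:ℝ) ≤ (2 * Real.pi) ^ m)]
  rw [Complex.real_smul]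

section helpers
variable {n : ℕ} {Ω : Matrix (Fin (2*n)) (Fin (2*n)) ℝ}

lemma hinvT (hdet : Ω.det ≠ 0) (hanti : Ωᵀ = -Ω) : (Ω⁻¹)ᵀ = -Ω⁻¹ := by
  have hneg : (-Ω)⁻¹ = -Ω⁻¹ := by
    apply Matrix.inv_eq_left_inv
    rw [Matrix.neg_mul, Matrix.mul_neg, neg_neg, Matrix.nonsing_inv_mul _ (isUnit_iff_ne_zero.mpr hdet)]
  rw [Matrix.transpose_nonsing_inv, hanti, hneg]

lemma hskew (hdet : Ω.det ≠ 0) (hanti : Ωᵀ = -Ω) (x y : Fin (2*n) → ℝ) :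
    x ⬝ᵥ (Ω⁻¹ *ᵥ y) = -(y ⬝ᵥ (Ω⁻¹ *ᵥ x)) := by
  rw [Matrix.dotProduct_mulVec]
  have : x ᵥ* Ω⁻¹ = (Ω⁻¹)ᵀ *ᵥ x := by
    rw [← Matrix.vecMul_transpose, Matrix.transpose_transpose]
  rw [this, hinvT hdet hanti, Matrix.neg_mulVec, neg_dotProduct, dotProduct_comm]

lemma hself (hdet : Ω.det ≠ 0) (hanti : Ωᵀ = -Ω) (x : Fin (2*n) → ℝ) :
    x ⬝ᵥ (Ω⁻¹ *ᵥ x) = 0 := by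
  have := hskew hdet hanti x x; linarith

lemma hOmegaDot (hdet : Ω.det ≠ 0) (hanti : Ωᵀ = -Ω) (ζ w : Fin (2*n) → ℝ) :
    (Ω *ᵥ ζ) ⬝ᵥ (Ω⁻¹ *ᵥ w) = -(ζ ⬝ᵥ w) := by
  calc (Ω *ᵥ ζ) ⬝ᵥ (Ω⁻¹ *ᵥ w)
      = (ζ ᵥ* Ωᵀ) ⬝ᵥ (Ω⁻¹ *ᵥ w) := by rw [Matrix.vecMul_transpose]
    _ = ζ ⬝ᵥ (Ωᵀ *ᵥ (Ω⁻¹ *ᵥ w)) := (Matrix.dotProduct_mulVec ζ Ωᵀ _).symm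
    _ = -(ζ ⬝ᵥ w) := by
        rw [hanti, Matrix.neg_mulVec, Matrix.mulVec_mulVec,
          Matrix.mul_nonsing_inv _ (isUnit_iff_ne_zero.mpr hdet), Matrix.one_mulVec,
          dotProduct_neg]

end helpers

section sympl
variable {n : ℕ} {Ω : Matrix (Fin (2*n)) (Fin (2*n)) ℝ}

lemma sympl_h1 (hdet : Ω.det ≠ 0) (hanti : Ωᵀ = -Ω) (z ζ' : Fin (2*n) → ℝ) :
    symplForm Ω (z + (1/2 : ℝ) • ζ') (z - (1/2 : ℝ) • ζ') = - symplForm Ω z ζ' := by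
  have e1 := hself hdet hanti z
  have e2 := hself hdet hanti ζ'
  have e3 := hskew hdet hanti ζ' z
  simp only [symplForm, Matrix.mulVec_add, Matrix.mulVec_sub, Matrix.mulVec_smul,
    add_dotProduct, sub_dotProduct, smul_dotProduct,
    dotProduct_add, dotProduct_sub, dotProduct_smul,
    smul_eq_mul] at *
  linarith

lemma sympl_h2 (hdet : Ω.det ≠ 0) (hanti : Ωᵀ = -Ω) (z ζ ζ' : Fin (2*n) → ℝ) :
    ζ ⬝ᵥ ζ' + 2 * symplForm Ω z ζ'
      = symplForm Ω (z - (1/2 : ℝ) • (Ω *ᵥ ζ)) ((2 : ℝ) • ζ') := by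
  have e4 := hOmegaDot hdet hanti ζ ζ'
  simp only [symplForm, Matrix.mulVec_smul, sub_dotProduct,
    smul_dotProduct, dotProduct_smul, smul_eq_mul] at *
  linarith

lemma sympl_dot (hdet : Ω.det ≠ 0) (hanti : Ωᵀ = -Ω) (u v : Fin (2*n) → ℝ) :
    symplForm Ω u v = ((-Ω⁻¹) *ᵥ u) ⬝ᵥ v := by
  rw [symplForm, Matrix.dotProduct_mulVec]
  congr 1
  rw [show u ᵥ* Ω⁻¹ = (Ω⁻¹)ᵀ *ᵥ u from by rw [← Matrix.vecMul_transpose, Matrix.transpose_transpose],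
    hinvT hdet hanti]

lemma sympl_neg_dot (hdet : Ω.det ≠ 0) (hanti : Ωᵀ = -Ω) (u v : Fin (2*n) → ℝ) :
    symplForm Ω u v = -(u ⬝ᵥ ((-Ω⁻¹) *ᵥ v)) := by
  simp [symplForm, Matrix.neg_mulVec, dotProduct_neg]

end sympl

-- change of variables
lemma integral_comp_mulVec' {m : ℕ} {M : Matrix (Fin m) (Fin m) ℝ} (hM : M.det ≠ 0)
    (g : (Fin m → ℝ) → ℂ) (hg : Continuous g) :
    ∫ x, g (M *ᵥ x) = |M.det|⁻¹ • ∫ x, g x := by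
  have h1 : Measure.map (Matrix.toLin' M) volume = ENNReal.ofReal |(M.det)⁻¹| • volume :=
    Real.map_matrix_volume_pi_eq_smul_volume_pi hM
  have hmeas : Measurable (Matrix.toLin' M) :=
    (Matrix.toLin' M).continuous_of_finiteDimensional.measurable
  have := MeasureTheory.integral_map hmeas.aemeasurable (f := g)
    (hg.aestronglyMeasurable (μ := Measure.map (Matrix.toLin' M) volume))
  rw [h1, integral_smul_measure] at this
  simp only [Matrix.toLin'_apply] at this
  rw [← this, ENNReal.toReal_ofReal (abs_nonneg _), abs_inv]

/-- the Weyl symbol of `Ã_ω`, obtained from its kernel by the partial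
Fourier transform in the second variable, equals `a(z − (1/2)Ωζ)`:
`∫ e^{-iζ·ζ'} K(z + ζ'/2, z − ζ'/2) dζ' = a(z − (1/2)Ωζ)`. -/
theorem stmt5 (n : ℕ) (hn : 1 ≤ n)
    (Ω : Matrix (Fin (2 * n)) (Fin (2 * n)) ℝ)
    (hΩ : IsUnit Ω.det) (hanti : Ωᵀ = -Ω)
    (a : SchwartzMap (Fin (2 * n) → ℝ) ℂ) (z ζ : Fin (2 * n) → ℝ) :
    ∫ ζ' : Fin (2 * n) → ℝ,
        Complex.exp (-Complex.I * ((ζ ⬝ᵥ ζ' : ℝ) : ℂ)) *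
          Akernel n Ω (fun w => a w) (z + (1/2 : ℝ) • ζ') (z - (1/2 : ℝ) • ζ')
      = a (z - (1/2 : ℝ) • (Ω *ᵥ ζ)) := by
  have hdet : Ω.det ≠ 0 := hΩ.ne_zero
  have hsne : Real.sqrt |Ω.det| ≠ 0 := (Real.sqrt_pos.mpr (abs_pos.mpr hdet)).ne'
  set w' : Fin (2*n) → ℝ := z - (1/2 : ℝ) • (Ω *ᵥ ζ) with hw'
  set Fh : (Fin (2*n) → ℝ) → ℂ :=
    fun x => ∫ v : Fin (2*n) → ℝ, Complex.exp (-Complex.I * ((x ⬝ᵥ v : ℝ) : ℂ)) * a v with hFh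
  set g : (Fin (2*n) → ℝ) → ℂ := fun u =>
    Complex.exp (-Complex.I * ((symplForm Ω w' u : ℝ) : ℂ)) *
      Fomega n Ω (fun w => a w) u with hg
  set G : (Fin (2*n) → ℝ) → ℂ := fun y =>
    Complex.exp (Complex.I * ((w' ⬝ᵥ y : ℝ) : ℂ)) *
      (((((2 * Real.pi) ^ n : ℝ)⁻¹ : ℝ) : ℂ) * (((Real.sqrt |Ω.det|)⁻¹ : ℝ) : ℂ) * Fh y) with hG
  -- Step A
  have hA : ∀ ζ' : Fin (2*n) → ℝ,
      Complex.exp (-Complex.I * ((ζ ⬝ᵥ ζ' : ℝ) : ℂ)) *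
          Akernel n Ω (fun w => a w) (z + (1/2 : ℝ) • ζ') (z - (1/2 : ℝ) • ζ')
        = (((2 / Real.pi) ^ n : ℝ) : ℂ) * (((Real.sqrt |Ω.det|)⁻¹ : ℝ) : ℂ) *
            g ((2 : ℝ) • ζ') := by
    intro ζ'
    unfold Akernel
    rw [show (z + (1/2 : ℝ) • ζ') - (z - (1/2 : ℝ) • ζ') = ζ' from by module]
    rw [sympl_h1 hdet hanti z ζ', hg]
    simp only []
    have hexp : Complex.exp (-Complex.I * ((symplForm Ω w' ((2:ℝ) • ζ') : ℝ) : ℂ))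
        = Complex.exp (-Complex.I * ((ζ ⬝ᵥ ζ' : ℝ) : ℂ)) *
            Complex.exp (2 * Complex.I * ((- symplForm Ω z ζ' : ℝ) : ℂ)) := by
      rw [← Complex.exp_add]
      congr 1
      rw [hw', ← sympl_h2 hdet hanti z ζ ζ']
      push_cast; ring
    rw [hexp]; ring
  simp_rw [hA]
  rw [MeasureTheory.integral_const_mul]
  rw [MeasureTheory.Measure.integral_comp_smul volume g 2]
  have hrank : Module.finrank ℝ (Fin (2*n) → ℝ) = 2*n := by simp
  rw [hrank]
  -- Step B
  have hGcont : Continuous G := by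
    apply Continuous.mul
    · exact Complex.continuous_exp.comp <| continuous_const.mul <|
        Complex.continuous_ofReal.comp <|
          continuous_finset_sum _ fun i _ => (continuous_const.mul (continuous_apply i))
    · exact continuous_const.mul (Fh_cont a)
  have hdetneg : (-Ω⁻¹ : Matrix (Fin (2*n)) (Fin (2*n)) ℝ).det ≠ 0 := by
    rw [Matrix.det_neg, Matrix.det_nonsing_inv, Ring.inverse_eq_inv']
    simp [hdet]
  have hGg : ∀ u, g u = G ((-Ω⁻¹) *ᵥ u) := by
    intro u
    rw [hg, hG]
    simp only []
    congr 1
    · rw [sympl_neg_dot hdet hanti w' u]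
      push_cast; ring_nf
    · unfold Fomega
      rw [mul_assoc, mul_assoc]
      congr 2
      rw [hFh]
      simp only []
      congr 1
      ext v
      rw [sympl_dot hdet hanti u v]
  have hint_g : ∫ u, g u = |(-Ω⁻¹ : Matrix (Fin (2*n)) (Fin (2*n)) ℝ).det|⁻¹ • ∫ y, G y := by
    simp_rw [hGg]
    exact integral_comp_mulVec' hdetneg G hGcont
  have habs : |(-Ω⁻¹ : Matrix (Fin (2*n)) (Fin (2*n)) ℝ).det|⁻¹ = |Ω.det| := by
    rw [Matrix.det_neg, Matrix.det_nonsing_inv, Ring.inverse_eq_inv']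
    simp [abs_mul, abs_inv, pow_mul]
  rw [hint_g, habs]
  -- Step C
  have hGy : ∀ y, G y = ((((2 * Real.pi) ^ n : ℝ)⁻¹ : ℝ) : ℂ) * (((Real.sqrt |Ω.det|)⁻¹ : ℝ) : ℂ) *
      (Complex.exp (Complex.I * ((w' ⬝ᵥ y : ℝ) : ℂ)) * Fh y) := by
    intro y; rw [hG]; ring
  have hC : ∫ y, G y = ((((2 * Real.pi) ^ n : ℝ)⁻¹ : ℝ) : ℂ) * (((Real.sqrt |Ω.det|)⁻¹ : ℝ) : ℂ) *
      ((((2 * Real.pi) ^ (2*n) : ℝ) : ℂ) * a w') := by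
    simp_rw [hGy]
    rw [mul_assoc, MeasureTheory.integral_const_mul]
    simp only [hFh]
    rw [invA a w']
    ring
  rw [hC]
  rw [_root_.abs_of_nonneg (by positivity : (0:ℝ) ≤ (((2:ℝ) ^ (2*n))⁻¹)), smul_smul,
    Complex.real_smul]
  obtain ⟨r, hr⟩ : ∃ r, Real.sqrt |Ω.det| = r := ⟨_, rfl⟩
  rw [hr] at hsne ⊢
  have hrr : r * r = |Ω.det| := by rw [← hr]; exact Real.mul_self_sqrt (abs_nonneg _)
  rw [← hrr]
  have hπ : (Real.pi : ℂ) ≠ 0 := by exact_mod_cast Real.pi_ne_zero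
  have hrC : (r : ℂ) ≠ 0 := by exact_mod_cast hsne
  push_cast
  field_simp
  have h2pi : ((2:ℂ) * ↑Real.pi) ≠ 0 := mul_ne_zero two_ne_zero hπ
  have hd : ((↑Real.pi:ℂ)^n * ↑r * ((2:ℂ)^(2*n) * (((2:ℂ)*↑Real.pi)^n * ↑r))) ≠ 0 := by
    apply mul_ne_zero (mul_ne_zero (pow_ne_zero _ hπ) hrC)
    exact mul_ne_zero (pow_ne_zero _ two_ne_zero) (mul_ne_zero (pow_ne_zero _ h2pi) hrC)
  rw [div_pow, div_mul_eq_mul_div, div_mul_eq_mul_div, div_eq_iff (pow_ne_zero _ hπ)]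
  ring
end

section
/- Let n ≥ 1, let Ω be a real invertible antisymmetric 2n×2n matrix, and let f be an invertible real 2n×2n matrix with Ω = f J fᵀ, where J = [[0,I],[−I,0]]. Let a, U ∈ 𝒮(ℝ^{2n}). Then M_f(Ã_ω U) = Ã'(M_f U) pointwise on ℝ^{2n}, where Ã_ω is the phase-space operator associated with Ω and symbol a, and Ã' is the phase-space operator associated with Ω = J and symbol a' = a ∘ f (i.e. a'(z) = a(fz)). -/
open MeasureTheory Matrix

/-- The standard symplectic matrix `J = [[0, I], [−I, 0]]` of size `2n × 2n`. -/
def Jmat (n : ℕ) : Matrix (Fin (2 * n)) (Fin (2 * n)) ℝ := fun i j =>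
  if (i : ℕ) + n = (j : ℕ) then 1 else if (j : ℕ) + n = (i : ℕ) then -1 else 0

/-- The phase-space operator `Ã_ω` with symbol `a`. -/
noncomputable def Atilde {m : ℕ} (n : ℕ) (Ω : Matrix (Fin m) (Fin m) ℝ)
    (a U : (Fin m → ℝ) → ℂ) (z : Fin m → ℝ) : ℂ :=
  ((((2 * Real.pi) ^ n : ℝ)⁻¹ : ℝ) : ℂ) * (((Real.sqrt |Ω.det|)⁻¹ : ℝ) : ℂ) *
    ∫ z₀ : Fin m → ℝ, Fomega n Ω a z₀ *
      Complex.exp (-Complex.I * ((symplForm Ω z z₀ : ℝ) : ℂ)) * U (z - (1/2 : ℝ) • z₀)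

/-- The unitary rescaling operator `M_f U(z) = |det f|^{1/2} U(fz)`. -/
noncomputable def Mf {m : ℕ} (f : Matrix (Fin m) (Fin m) ℝ)
    (U : (Fin m → ℝ) → ℂ) (z : Fin m → ℝ) : ℂ :=
  ((Real.sqrt |f.det| : ℝ) : ℂ) * U (f *ᵥ z)

/-- Change of variables under an invertible linear map on `ℝ^m`. -/
lemma cov {m : ℕ} {M : Matrix (Fin m) (Fin m) ℝ} (hM : M.det ≠ 0)
    (g : (Fin m → ℝ) → ℂ) : ∫ x, g (M *ᵥ x) = |M.det|⁻¹ • ∫ x, g x := by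
  haveI : Invertible M := M.invertibleOfIsUnitDet hM.isUnit
  let e : (Fin m → ℝ) ≃ₗ[ℝ] (Fin m → ℝ) := M.toLinearEquiv' ‹_›
  let e' : (Fin m → ℝ) ≃ᵐ (Fin m → ℝ) :=
    e.toContinuousLinearEquiv.toHomeomorph.toMeasurableEquiv
  have he : ∀ x, e' x = M *ᵥ x := fun x => by
    simp [e', e, Matrix.toLinearEquiv', Matrix.toLin'_apply]
  have hcoe : (⇑e' : (Fin m → ℝ) → (Fin m → ℝ)) = ⇑(Matrix.toLin' M) := by
    funext x; rw [he, Matrix.toLin'_apply]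
  have hmap : (volume : Measure (Fin m → ℝ)).map e'
      = ENNReal.ofReal |M.det⁻¹| • volume := by
    rw [show ((volume : Measure (Fin m → ℝ)).map e') = Measure.map (Matrix.toLin' M) volume by
      rw [← hcoe]]
    exact Real.map_matrix_volume_pi_eq_smul_volume_pi hM
  calc ∫ x, g (M *ᵥ x) = ∫ x, g (e' x) := by simp_rw [he]
    _ = ∫ y, g y ∂((volume : Measure (Fin m → ℝ)).map e') := (integral_map_equiv e' g).symm
    _ = |M.det|⁻¹ • ∫ x, g x := by
        rw [hmap, integral_smul_measure, ENNReal.toReal_ofReal (abs_nonneg _), abs_inv]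

lemma symp_eq {m : ℕ} {Ω J f : Matrix (Fin m) (Fin m) ℝ}
    (hf : IsUnit f.det) (hfJ : Ω = f * J * fᵀ) (z z' : Fin m → ℝ) :
    symplForm Ω (f *ᵥ z) (f *ᵥ z') = symplForm J z z' := by
  have hft : IsUnit fᵀ.det := by rwa [Matrix.det_transpose]
  have hΩinv : Ω⁻¹ = (fᵀ)⁻¹ * (J⁻¹ * f⁻¹) := by
    rw [hfJ, Matrix.mul_inv_rev, Matrix.mul_inv_rev]
  have hkey : fᵀ * Ω⁻¹ * f = J⁻¹ := by
    rw [hΩinv, ← mul_assoc, Matrix.mul_nonsing_inv _ hft, one_mul, mul_assoc,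
      Matrix.nonsing_inv_mul _ hf, mul_one]
  unfold symplForm
  rw [Matrix.mulVec_mulVec, Matrix.dotProduct_mulVec, Matrix.dotProduct_mulVec,
    ← Matrix.vecMul_transpose, Matrix.vecMul_vecMul, ← hkey]
  rw [mul_assoc]

lemma sqrt_det_eq {m : ℕ} {Ω J f : Matrix (Fin m) (Fin m) ℝ}
    (hfJ : Ω = f * J * fᵀ) :
    Real.sqrt |Ω.det| = |f.det| * Real.sqrt |J.det| := by
  have : |Ω.det| = f.det ^ 2 * |J.det| := by
    rw [hfJ, Matrix.det_mul, Matrix.det_mul, Matrix.det_transpose, abs_mul, abs_mul, ← sq_abs]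
    ring
  rw [this, Real.sqrt_mul (sq_nonneg _), Real.sqrt_sq_eq_abs]

lemma fomega_eq {m : ℕ} (n : ℕ) {Ω J f : Matrix (Fin m) (Fin m) ℝ}
    (hf : IsUnit f.det) (hfJ : Ω = f * J * fᵀ)
    (a : (Fin m → ℝ) → ℂ) (z : Fin m → ℝ) :
    Fomega n Ω a (f *ᵥ z) = Fomega n J (fun w => a (f *ᵥ w)) z := by
  have hd : f.det ≠ 0 := hf.ne_zero
  have hcov := cov hd
      (fun z' => Complex.exp (-Complex.I * ((symplForm Ω (f *ᵥ z) z' : ℝ) : ℂ)) * a z')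
  simp only [symp_eq hf hfJ] at hcov
  unfold Fomega
  rw [sqrt_det_eq hfJ, hcov]
  have h1 : (|f.det| * Real.sqrt |J.det|) ≠ 0 ∨ True := Or.inr trivial
  rw [Complex.real_smul]
  push_cast
  rw [mul_inv]
  have hd' : ((|f.det| : ℝ) : ℂ) ≠ 0 := by
    simpa using (abs_ne_zero.mpr hd)
  field_simp

lemma const_helper (c s q d X : ℂ) (hd : d ≠ 0) :
    q * (c * (d * s)⁻¹ * (d * X)) = c * s⁻¹ * (q * X) := by
  rw [mul_inv]
  linear_combination q * c * s⁻¹ * X * inv_mul_cancel₀ hd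

/-- if `Ω = f J fᵀ` then `M_f(Ã_ω U) = Ã'(M_f U)`, where `Ã'` is
the phase-space operator associated with `Ω = J` and symbol `a' = a ∘ f`. -/
theorem stmt9 (n : ℕ) (hn : 1 ≤ n)
    (Ω : Matrix (Fin (2 * n)) (Fin (2 * n)) ℝ)
    (hΩ : IsUnit Ω.det) (hanti : Ωᵀ = -Ω)
    (f : Matrix (Fin (2 * n)) (Fin (2 * n)) ℝ)
    (hf : IsUnit f.det) (hfJ : Ω = f * Jmat n * fᵀ)
    (a U : SchwartzMap (Fin (2 * n) → ℝ) ℂ) (z : Fin (2 * n) → ℝ) :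
    Mf f (Atilde n Ω (fun w => a w) (fun w => U w)) z
      = Atilde n (Jmat n) (fun w => a (f *ᵥ w)) (Mf f (fun w => U w)) z := by
  have hd : f.det ≠ 0 := hf.ne_zero
  have hd' : (|f.det| : ℝ) ≠ 0 := abs_ne_zero.mpr hd
  unfold Mf Atilde
  -- change of variables in the outer integral
  have key : (∫ z₀, Fomega n Ω (fun w => a w) z₀ *
        Complex.exp (-Complex.I * ((symplForm Ω (f *ᵥ z) z₀ : ℝ) : ℂ)) *
        U (f *ᵥ z - (1/2 : ℝ) • z₀))
      = |f.det| • ∫ w, Fomega n (Jmat n) (fun w => a (f *ᵥ w)) w *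
        Complex.exp (-Complex.I * ((symplForm (Jmat n) z w : ℝ) : ℂ)) *
        U (f *ᵥ (z - (1/2 : ℝ) • w)) := by
    have h := cov hd (fun z₀ => Fomega n Ω (fun w => a w) z₀ *
        Complex.exp (-Complex.I * ((symplForm Ω (f *ᵥ z) z₀ : ℝ) : ℂ)) *
        U (f *ᵥ z - (1/2 : ℝ) • z₀))
    simp only [symp_eq hf hfJ, fomega_eq n hf hfJ, Matrix.mulVec_sub,
      Matrix.mulVec_smul] at h ⊢
    rw [h, smul_smul, mul_inv_cancel₀ hd', one_smul]
  rw [key]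
  -- pull the constant out of the right-hand integral
  have hpull : (∫ w, Fomega n (Jmat n) (fun w => a (f *ᵥ w)) w *
        Complex.exp (-Complex.I * ((symplForm (Jmat n) z w : ℝ) : ℂ)) *
        (((Real.sqrt |f.det| : ℝ) : ℂ) * U (f *ᵥ (z - (1/2 : ℝ) • w))))
      = ((Real.sqrt |f.det| : ℝ) : ℂ) * ∫ w, Fomega n (Jmat n) (fun w => a (f *ᵥ w)) w *
        Complex.exp (-Complex.I * ((symplForm (Jmat n) z w : ℝ) : ℂ)) *
        U (f *ᵥ (z - (1/2 : ℝ) • w)) := by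
    rw [← integral_const_mul]
    congr 1
    funext w
    ring
  rw [hpull, sqrt_det_eq hfJ, Complex.real_smul]
  have hdc : ((|f.det| : ℝ) : ℂ) ≠ 0 := by exact_mod_cast hd'
  push_cast
  exact const_helper _ _ _ _ _ hdc
end
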